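/- Let f(t) denote the number of self-conjugate partitions in DS(t). Then f(1) = 1, f(2) = 2, f(3) = 3, and f(t) = f(t−1) + f(t−3) for all t ≥ 3 (with the conventions f(0) = f(−1) = 1). -/

import Mathlib

-- Section 1: downward-closed sets of naturals
lemma finset_dc_eq_range (F : Finset ℕ) (h : ∀ a b : ℕ, a ≤ b → b ∈ F → a ∈ F) :
    F = Finset.range F.card := by
  have key : ∀ x : ℕ, x ∈ F ↔ x < F.card := by
    intro x
    constructor
    · intro hx
      have hsub : Finset.range (x+1) ⊆ F := by
        intro y hy
        exact h y x (Nat.lt_succ_iff.mp (Finset.mem_range.mp hy)) hx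
      have := Finset.card_le_card hsub
      simpa using this
    · intro hx
      by_contra hnx
      have hsub : F ⊆ Finset.range x := by
        intro y hy
        by_contra hny
        exact hnx (h x y (Nat.le_of_not_lt (fun hyx => hny (Finset.mem_range.mpr hyx))) hy)
      have := Finset.card_le_card hsub
      simp at this
      omega
  ext x
  simp [key]

lemma set_dc_mem_iff (S : Set ℕ) (hfin : S.Finite) (h : ∀ a b : ℕ, a ≤ b → b ∈ S → a ∈ S) :
    ∀ x, x ∈ S ↔ x < Nat.card S := by
  have hF : (hfin.toFinset : Finset ℕ) = Finset.range hfin.toFinset.card := by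
    apply finset_dc_eq_range
    intro a b hab hb
    simp only [Set.Finite.mem_toFinset] at *
    exact h a b hab hb
  have hcard : Nat.card S = hfin.toFinset.card := by
    rw [Nat.card_coe_set_eq, Set.ncard_eq_toFinset_card _ hfin]
  intro x
  rw [hcard]
  constructor
  · intro hx
    have : x ∈ hfin.toFinset := hfin.mem_toFinset.mpr hx
    rw [hF] at this; simpa using this
  · intro hx
    have : x ∈ Finset.range hfin.toFinset.card := Finset.mem_range.mpr hx
    rw [← hF] at this
    exact hfin.mem_toFinset.mp this



/-- An integer partition, given by its (weakly decreasing, eventually zero)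
sequence of parts, indexed from `0`. -/
structure IntPartition where
  parts : ℕ → ℕ
  antitone : ∀ i j, i ≤ j → parts j ≤ parts i
  finite : ∃ N, ∀ i, N ≤ i → parts i = 0

namespace IntPartition

/-- The size of a partition: the sum of its parts. -/
noncomputable def size (lam : IntPartition) : ℕ := ∑ᶠ i, lam.parts i

/-- The parts of the conjugate partition: `conjParts lam j` is the number of
rows `i` with `lam.parts i > j` (rows and columns are `0`-indexed). -/
noncomputable def conjParts (lam : IntPartition) (j : ℕ) : ℕ :=
  Nat.card {i : ℕ | j < lam.parts i}

/-- A partition is self-conjugate if it equals its conjugate. -/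
def IsSelfConjugate (lam : IntPartition) : Prop :=
  ∀ j, lam.conjParts j = lam.parts j

/-- `(i, j)` (both `0`-indexed) is a cell of the Young diagram of `lam`. -/
def IsCell (lam : IntPartition) (i j : ℕ) : Prop := j < lam.parts i

/-- The hook length of the cell `(i, j)` (both `0`-indexed): the number of
cells directly to the right, plus the number directly below, plus one. -/
noncomputable def hook (lam : IntPartition) (i j : ℕ) : ℕ :=
  (lam.parts i - j) + (lam.conjParts j - i) - 1

/-- A partition is a `t`-core if no hook length is divisible by `t`. -/
def IsCore (lam : IntPartition) (t : ℕ) : Prop :=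
  ∀ i j, lam.IsCell i j → ¬ (t ∣ lam.hook i j)

/-- The size of the Durfee square: the largest `k` such that the partition has
at least `k` parts of size at least `k`. -/
noncomputable def durfee (lam : IntPartition) : ℕ :=
  Nat.card {i : ℕ | i < lam.parts i}

/-- A partition has distinct parts if its (nonzero) parts are pairwise different. -/
def DistinctParts (lam : IntPartition) : Prop :=
  ∀ i j, lam.parts i ≠ 0 → lam.parts j ≠ 0 → i ≠ j → lam.parts i ≠ lam.parts j

/-- The set of main diagonal hook lengths of `lam`. -/
noncomputable def MD (lam : IntPartition) : Set ℕ :=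
  {h | ∃ i < lam.durfee, lam.hook i i = h}

/-- `lam ∈ DS(t)`: `lam` is a self-conjugate `(t, t+1)`-core partition whose
first `durfee lam` parts are pairwise distinct. -/
def InDS (lam : IntPartition) (t : ℕ) : Prop :=
  lam.IsSelfConjugate ∧ lam.IsCore t ∧ lam.IsCore (t + 1) ∧
    ∀ i j, i < lam.durfee → j < lam.durfee → i ≠ j → lam.parts i ≠ lam.parts j

end IntPartition


-- Section 2: partition basics
namespace IntPartition

theorem ext' {lam mu : IntPartition} (h : lam.parts = mu.parts) : lam = mu := by
  cases lam; cases mu; simp_all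

lemma parts_set_finite (lam : IntPartition) (j : ℕ) : {i : ℕ | j < lam.parts i}.Finite := by
  obtain ⟨N, hN⟩ := lam.finite
  apply Set.Finite.subset (Set.finite_Iio N)
  intro i hi
  simp only [Set.mem_setOf_eq] at hi
  simp only [Set.mem_Iio]
  by_contra h
  push_neg at h
  have := hN i h
  omega

lemma cell_iff (lam : IntPartition) (i j : ℕ) : i < lam.conjParts j ↔ j < lam.parts i := by
  have := set_dc_mem_iff {i : ℕ | j < lam.parts i} (lam.parts_set_finite j)
    (fun a b hab hb => lt_of_lt_of_le hb (lam.antitone a b hab)) i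
  simp only [Set.mem_setOf_eq] at this
  rw [conjParts]
  exact this.symm

lemma durfee_set_finite (lam : IntPartition) : {i : ℕ | i < lam.parts i}.Finite := by
  obtain ⟨N, hN⟩ := lam.finite
  apply Set.Finite.subset (Set.finite_Iio N)
  intro i hi
  simp only [Set.mem_setOf_eq] at hi
  simp only [Set.mem_Iio]
  by_contra h
  push_neg at h
  have := hN i h
  omega

lemma durfee_iff (lam : IntPartition) (i : ℕ) : i < lam.durfee ↔ i < lam.parts i := by
  have := set_dc_mem_iff {i : ℕ | i < lam.parts i} lam.durfee_set_finite
    (fun a b hab hb => by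
      simp only [Set.mem_setOf_eq] at *
      calc a ≤ b := hab
        _ < lam.parts b := hb
        _ ≤ lam.parts a := lam.antitone a b hab) i
  simp only [Set.mem_setOf_eq] at this
  rw [durfee]
  exact this.symm

/-- integer content `c i = parts i - i`. -/
noncomputable def cInt (lam : IntPartition) (i : ℕ) : ℤ := (lam.parts i : ℤ) - i

lemma cInt_strictAnti (lam : IntPartition) : StrictAnti lam.cInt := by
  have h : ∀ i, lam.cInt (i+1) < lam.cInt i := by
    intro i
    have := lam.antitone i (i+1) (by omega)
    simp only [cInt]
    omega
  exact strictAnti_nat_of_succ_lt h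

lemma cInt_le (lam : IntPartition) {i j : ℕ} (hij : i ≤ j) :
    lam.cInt j + (j - i : ℕ) ≤ lam.cInt i := by
  induction j with
  | zero =>
    have : i = 0 := by omega
    subst this; simp
  | succ n ih =>
    rcases Nat.lt_or_ge i (n+1) with h | h
    · have h1 := ih (by omega)
      have h2 := lam.cInt_strictAnti (show n < n + 1 by omega)
      have : ((n + 1 - i : ℕ) : ℤ) = (n - i : ℕ) + 1 := by push_cast [Nat.sub_add_comm]; omega
      omega
    · have : i = n + 1 := by omega
      subst this
      simp

end IntPartition

namespace IntPartition

section SelfConj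

variable {lam : IntPartition}

lemma cell_iff_cInt (hsc : lam.IsSelfConjugate) (i j : ℕ) :
    j < lam.parts i ↔ 2 ≤ lam.cInt i + lam.cInt j := by
  constructor
  · intro h
    have h2 : i < lam.parts j := by
      have := (lam.cell_iff i j).mpr h
      rwa [hsc j] at this
    simp only [cInt]; omega
  · intro h
    by_contra hn
    push_neg at hn
    have h2 : ¬ i < lam.parts j := by
      intro hc
      have := (lam.cell_iff i j).mpr
      rw [hsc j] at *
      exact absurd ((lam.cell_iff i j).mp (by rwa [hsc j])) (by omega)
    push_neg at h2
    simp only [cInt] at h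
    omega

lemma hook_int (hsc : lam.IsSelfConjugate) {i j : ℕ} (hcell : j < lam.parts i) :
    (lam.hook i j : ℤ) = lam.cInt i + lam.cInt j - 1 := by
  have h2 : i < lam.parts j := by
    have := (lam.cell_iff i j).mpr hcell
    rwa [hsc j] at this
  simp only [hook, cInt, hsc j]
  omega

lemma core_iff (hsc : lam.IsSelfConjugate) (s : ℕ) :
    lam.IsCore s ↔ ∀ i j : ℕ, 2 ≤ lam.cInt i + lam.cInt j →
      ¬ (s:ℤ) ∣ (lam.cInt i + lam.cInt j - 1) := by
  constructor
  · intro hc i j hcell hdvd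
    have hcell' : j < lam.parts i := (cell_iff_cInt hsc i j).mpr hcell
    apply hc i j hcell'
    have := hook_int hsc hcell'
    rw [← Int.natCast_dvd_natCast]
    rw [this]
    exact hdvd
  · intro h i j hcell hdvd
    have hcell' : 2 ≤ lam.cInt i + lam.cInt j := (cell_iff_cInt hsc i j).mp hcell
    apply h i j hcell'
    rw [← hook_int hsc hcell]
    exact_mod_cast hdvd

/-- ν a = number of rows `i` with `i + a < parts i`. -/
noncomputable def nu (lam : IntPartition) (a : ℕ) : ℕ :=
  Nat.card {i : ℕ | i + a < lam.parts i}

lemma nu_iff (lam : IntPartition) (a : ℕ) (i : ℕ) : i < lam.nu a ↔ i + a < lam.parts i := by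
  have hfin : {i : ℕ | i + a < lam.parts i}.Finite := by
    apply Set.Finite.subset lam.durfee_set_finite
    intro i hi
    simp only [Set.mem_setOf_eq] at *
    omega
  have := set_dc_mem_iff {i : ℕ | i + a < lam.parts i} hfin
    (fun x y hxy hy => by
      simp only [Set.mem_setOf_eq] at *
      have := lam.antitone x y hxy
      omega) i
  simp only [Set.mem_setOf_eq] at this
  rw [nu]
  exact this.symm

lemma nu_iff' (hsc : lam.IsSelfConjugate) (a : ℕ) (i : ℕ) :
    i < lam.nu a ↔ i < lam.parts (i + a) := by
  rw [nu_iff, ← lam.cell_iff i (i + a), hsc (i + a)]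

lemma nu_anti (lam : IntPartition) (a : ℕ) : lam.nu (a+1) ≤ lam.nu a := by
  by_contra h
  push_neg at h
  have h1 := (lam.nu_iff (a+1) (lam.nu a)).mp h
  have h2 := (lam.nu_iff a (lam.nu a)).not.mp (by omega)
  omega

lemma nu_sub (lam : IntPartition) (a : ℕ) : lam.nu a ≤ lam.nu (a+1) + 1 := by
  rcases Nat.eq_zero_or_pos (lam.nu a) with h | h
  · omega
  · set i := lam.nu a - 1 with hi
    have h1 := (lam.nu_iff a i).mp (by omega)
    rcases Nat.eq_zero_or_pos i with h0 | h0
    · omega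
    · have h2 : (i - 1) + (a + 1) < lam.parts (i - 1) := by
        have := lam.antitone (i-1) i (by omega)
        omega
      have := (lam.nu_iff (a+1) (i-1)).mpr h2
      omega

lemma exists_pos_iff (lam : IntPartition) (a : ℕ) :
    (∃ i, lam.parts i = i + a + 1) ↔ lam.nu (a+1) < lam.nu a := by
  constructor
  · rintro ⟨i, hi⟩
    have h1 : i < lam.nu a := (lam.nu_iff a i).mpr (by omega)
    have h2 : ¬ i < lam.nu (a+1) := (lam.nu_iff (a+1) i).not.mpr (by omega)
    omega
  · intro h
    refine ⟨lam.nu (a+1), ?_⟩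
    have h1 := (lam.nu_iff a (lam.nu (a+1))).mp h
    have h2 := (lam.nu_iff (a+1) (lam.nu (a+1))).not.mp (by omega)
    omega

lemma exists_neg_iff (hsc : lam.IsSelfConjugate) (a : ℕ) :
    (∃ j, lam.parts (j + a) = j) ↔ lam.nu a = lam.nu (a+1) := by
  constructor
  · rintro ⟨j, hj⟩
    have h1 : ¬ j < lam.nu a := (nu_iff' hsc a j).not.mpr (by omega)
    rcases Nat.eq_zero_or_pos j with h0 | h0
    · have := lam.nu_anti a
      omega
    · have h2 : (j - 1) < lam.parts ((j-1) + (a+1)) := by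
        have : (j-1) + (a+1) = j + a := by omega
        rw [this]
        omega
      have h3 := (nu_iff' hsc (a+1) (j-1)).mpr h2
      have := lam.nu_anti a
      omega
  · intro h
    refine ⟨lam.nu a, ?_⟩
    have h1 : ¬ (lam.nu a < lam.parts (lam.nu a + a)) := by
      intro hc
      exact absurd ((nu_iff' hsc a (lam.nu a)).mpr hc) (by omega)
    rcases Nat.eq_zero_or_pos (lam.nu a) with h0 | h0
    · omega
    · have h2 : (lam.nu a - 1) < lam.nu (a+1) := by omega
      have h3 := (nu_iff' hsc (a+1) (lam.nu a - 1)).mp h2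
      have : (lam.nu a - 1) + (a+1) = lam.nu a + a := by omega
      rw [this] at h3
      omega

/-- The xor lemma: for `a ≥ 0`, `a+1` is a value of `cInt` iff `-a` is not. -/
lemma cInt_xor (hsc : lam.IsSelfConjugate) (a : ℕ) :
    (∃ i, lam.cInt i = (a:ℤ) + 1) ↔ ¬ ∃ j, lam.cInt j = -(a:ℤ) := by
  have e1 : (∃ i, lam.cInt i = (a:ℤ) + 1) ↔ ∃ i, lam.parts i = i + a + 1 := by
    constructor
    · rintro ⟨i, hi⟩; exact ⟨i, by simp only [cInt] at hi; omega⟩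
    · rintro ⟨i, hi⟩; exact ⟨i, by simp only [cInt]; omega⟩
  have e2 : (∃ j, lam.cInt j = -(a:ℤ)) ↔ ∃ j, lam.parts (j + a) = j := by
    constructor
    · rintro ⟨j, hj⟩
      simp only [cInt] at hj
      refine ⟨j - a, ?_⟩
      have hja : a ≤ j := by omega
      have : j - a + a = j := by omega
      rw [this]
      omega
    · rintro ⟨j, hj⟩
      exact ⟨j + a, by simp only [cInt]; omega⟩
  rw [e1, e2, lam.exists_pos_iff a, exists_neg_iff hsc a]
  have := lam.nu_anti a
  omega

end SelfConj

end IntPartition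

namespace IntPartition

/-- The diagonal hook lengths of `lam`, as a finset. -/
noncomputable def toS (lam : IntPartition) : Finset ℕ :=
  (Finset.range lam.durfee).image (fun i => 2 * (lam.parts i - i) - 1)

section SelfConjS

variable {lam : IntPartition}

lemma toS_val (i : ℕ) (hi : i < lam.durfee) :
    ((2 * (lam.parts i - i) - 1 : ℕ) : ℤ) = 2 * lam.cInt i - 1 := by
  have := (lam.durfee_iff i).mp hi
  simp only [cInt]
  omega

/-- Membership in the "extended beta set" determined by a finset of positive odds. -/
def ESmem (S : Finset ℕ) (x : ℤ) : Prop :=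
  (0 < x ∧ x.toNat ∈ S) ∨ (x < 0 ∧ x % 2 = 1 ∧ (-x).toNat ∉ S)

lemma memE_pos_iff {x : ℤ} (hx : 0 < x) :
    (∃ i, 2 * lam.cInt i - 1 = x) ↔ x.toNat ∈ lam.toS := by
  constructor
  · rintro ⟨i, hi⟩
    have hci : 1 ≤ lam.cInt i := by omega
    have hdi : i < lam.durfee := by
      rw [lam.durfee_iff]
      simp only [cInt] at hci
      omega
    simp only [toS, Finset.mem_image]
    refine ⟨i, Finset.mem_range.mpr hdi, ?_⟩
    have := toS_val i hdi
    omega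
  · intro hx2
    simp only [toS, Finset.mem_image] at hx2
    obtain ⟨i, hi, hval⟩ := hx2
    refine ⟨i, ?_⟩
    have := toS_val i (Finset.mem_range.mp hi)
    omega

lemma memE_neg_iff (hsc : lam.IsSelfConjugate) {x : ℤ} (hx : x < 0) (hodd : x % 2 = 1) :
    (∃ i, 2 * lam.cInt i - 1 = x) ↔ (-x).toNat ∉ lam.toS := by
  obtain ⟨a, ha⟩ : ∃ a : ℕ, x = -(2*(a:ℤ)+1) := ⟨((-x-1)/2).toNat, by omega⟩
  have h1 : (∃ i, 2 * lam.cInt i - 1 = x) ↔ ∃ i, lam.cInt i = -(a:ℤ) := by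
    constructor
    · rintro ⟨i, hi⟩; exact ⟨i, by omega⟩
    · rintro ⟨i, hi⟩; exact ⟨i, by omega⟩
  have h2 : ((2*(a:ℤ)+1).toNat ∈ lam.toS) ↔ ∃ i, lam.cInt i = (a:ℤ)+1 := by
    rw [← memE_pos_iff (x := (2*(a:ℤ)+1)) (by omega)]
    constructor
    · rintro ⟨i, hi⟩; exact ⟨i, by omega⟩
    · rintro ⟨i, hi⟩; exact ⟨i, by omega⟩
  have h3 := cInt_xor hsc a
  have h4 : (-x).toNat = (2*(a:ℤ)+1).toNat := by omega
  rw [h1, h4, h2]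
  tauto

lemma memE_iff (hsc : lam.IsSelfConjugate) {x : ℤ} (hodd : x % 2 = 1) :
    (∃ i, 2 * lam.cInt i - 1 = x) ↔ ESmem lam.toS x := by
  rcases lt_trichotomy x 0 with h | h | h
  · rw [memE_neg_iff hsc h hodd]
    simp only [ESmem]
    constructor
    · intro hn; exact Or.inr ⟨h, hodd, hn⟩
    · rintro (⟨h1, _⟩ | ⟨_, _, h3⟩); · omega
      · exact h3
  · omega
  · rw [memE_pos_iff h]
    simp only [ESmem]
    constructor
    · intro hm; exact Or.inl ⟨h, hm⟩
    · rintro (⟨_, h2⟩ | ⟨h1, _⟩); · exact h2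
      · omega

/-- the core condition at level of extended beta sets -/
def CoreCondZ (s : ℕ) (S : Finset ℕ) : Prop :=
  ∀ x y : ℤ, x % 2 = 1 → y % 2 = 1 → ESmem S x → ESmem S y → 0 < x + y →
    ¬ (2*(s:ℤ)) ∣ (x + y)

lemma core_iff_coreCondZ (hsc : lam.IsSelfConjugate) (s : ℕ) :
    lam.IsCore s ↔ CoreCondZ s lam.toS := by
  rw [core_iff hsc]
  constructor
  · intro h x y hx hy hmx hmy hxy
    obtain ⟨i, hi⟩ := (memE_iff hsc hx).mpr hmx
    obtain ⟨j, hj⟩ := (memE_iff hsc hy).mpr hmy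
    intro hdvd
    refine h i j (by omega) ?_
    obtain ⟨u, hu⟩ := hdvd
    refine ⟨u, ?_⟩
    have h2 : 2 * (lam.cInt i + lam.cInt j - 1) = x + y := by omega
    have h3 : (2:ℤ)*(s:ℤ)*u = 2*((s:ℤ)*u) := by ring
    linarith
  · intro h i j hcell hdvd
    refine h (2 * lam.cInt i - 1) (2 * lam.cInt j - 1) (by omega) (by omega)
      ((memE_iff hsc (by omega)).mp ⟨i, rfl⟩) ((memE_iff hsc (by omega)).mp ⟨j, rfl⟩)
      (by omega) ?_
    obtain ⟨u, hu⟩ := hdvd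
    refine ⟨u, ?_⟩
    have h3 : (2:ℤ)*(s:ℤ)*u = 2*((s:ℤ)*u) := by ring
    linarith

end SelfConjS

end IntPartition

lemma int_dvd_window {m z : ℤ} (hm : 0 < m) (h1 : 0 < z) (h2 : z < 2*m) (hd : m ∣ z) :
    z = m := by
  obtain ⟨u, rfl⟩ := hd
  have hu1 : 0 < u := by
    rcases mul_pos_iff.mp h1 with ⟨_, h⟩ | ⟨h, _⟩
    · exact h
    · omega
  have hu2 : u < 2 := by
    have h2' : m * u < m * 2 := by linarith
    exact lt_of_mul_lt_mul_left h2' (by omega)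
  have : u = 1 := by omega
  subst this
  ring

namespace IntPartition

/-- The final combinatorial condition on the finset of diagonal hook lengths. -/
def CondQ (t : ℕ) (S : Finset ℕ) : Prop :=
  (∀ a ∈ S, a % 2 = 1 ∧ a < 2*t) ∧
  (∀ a ∈ S, ∀ b ∈ S, a + b ≠ 2*t ∧ a + b ≠ 2*t + 2 ∧ b ≠ a + 2)

lemma esmem_of_mem {S : Finset ℕ} {a : ℕ} (ha : a ∈ S) (hpos : 0 < a) :
    ESmem S (a : ℤ) := by
  left
  constructor
  · exact_mod_cast hpos
  · simpa using ha

lemma esmem_of_not_mem {S : Finset ℕ} {b : ℕ} (hb : b ∉ S) (hpos : 0 < b) (hodd : b % 2 = 1) :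
    ESmem S (-(b : ℤ)) := by
  right
  refine ⟨by omega, by omega, by simpa using hb⟩

lemma coreCond_iff_condQ {t : ℕ} (ht : 1 ≤ t) (S : Finset ℕ) (hodd : ∀ a ∈ S, a % 2 = 1) :
    (CoreCondZ t S ∧ CoreCondZ (t+1) S ∧ (∀ a ∈ S, ∀ b ∈ S, b ≠ a + 2)) ↔ CondQ t S := by
  constructor
  · rintro ⟨cct, cct1, nd⟩
    have hodd' : ∀ a ∈ S, ((a:ℤ) % 2 = 1) := fun a ha => by have := hodd a ha; omega
    have hpos : ∀ a ∈ S, 0 < a := fun a ha => by have := hodd a ha; omega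
    have pair : ∀ a ∈ S, ∀ b ∈ S, ¬ ((2*(t:ℤ)) ∣ (a+b)) ∧ ¬ ((2*((t:ℤ)+1)) ∣ (a+b)) := by
      intro a ha b hb
      constructor
      · exact cct a b (hodd' a ha) (hodd' b hb) (esmem_of_mem ha (hpos a ha))
          (esmem_of_mem hb (hpos b hb)) (by have := hpos a ha; have := hpos b hb; omega)
      · have := cct1 a b (hodd' a ha) (hodd' b hb) (esmem_of_mem ha (hpos a ha))
          (esmem_of_mem hb (hpos b hb)) (by have := hpos a ha; have := hpos b hb; omega)
        push_cast at this
        exact this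
    have step : ∀ a ∈ S, ∀ b : ℕ, b % 2 = 1 → b ∉ S → b < a →
        ¬ ((2*(t:ℤ)) ∣ ((a:ℤ)-b)) ∧ ¬ ((2*((t:ℤ)+1)) ∣ ((a:ℤ)-b)) := by
      intro a ha b hbo hbn hba
      have h1 := esmem_of_mem ha (hpos a ha)
      have h2 := esmem_of_not_mem hbn (by omega) hbo
      constructor
      · have := cct a (-(b:ℤ)) (hodd' a ha) (by omega) h1 h2 (by omega)
        simpa [sub_eq_add_neg] using this
      · have := cct1 a (-(b:ℤ)) (hodd' a ha) (by omega) h1 h2 (by omega)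
        push_cast at this
        simpa [sub_eq_add_neg] using this
    have hbound : ∀ a ∈ S, a < 2*t := by
      intro a ha
      by_contra hc
      push_neg at hc
      have hao := hodd a ha
      have ha1 : 2*t + 1 ≤ a := by omega
      have hb1 : (a - 2*t) ∈ S := by
        by_contra hbn
        have := (step a ha (a - 2*t) (by omega) hbn (by omega)).1
        exact this ⟨1, by push_cast; omega⟩
      by_cases hcase : a = 2*t + 1
      · have h1 : (1:ℕ) ∈ S := by
          have : a - 2*t = 1 := by omega
          rwa [this] at hb1
        have := (pair a ha 1 h1).2
        exact this ⟨1, by push_cast; omega⟩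
      · have ha3 : 2*t + 3 ≤ a := by omega
        have hb2 : (a - 2*t - 2) ∈ S := by
          by_contra hbn
          have := (step a ha (a - 2*t - 2) (by omega) hbn (by omega)).2
          exact this ⟨1, by push_cast; omega⟩
        exact nd (a - 2*t - 2) hb2 (a - 2*t) hb1 (by omega)
    refine ⟨fun a ha => ⟨hodd a ha, hbound a ha⟩, fun a ha b hb => ⟨?_, ?_, nd a ha b hb⟩⟩
    · intro hsum
      exact (pair a ha b hb).1 ⟨1, by push_cast; omega⟩
    · intro hsum
      exact (pair a ha b hb).2 ⟨1, by push_cast; omega⟩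
  · rintro ⟨h1, h2⟩
    refine ⟨?_, ?_, fun a ha b hb => (h2 a ha b hb).2.2⟩
    · intro x y hx hy hmx hmy hxy hdvd
      rcases hmx with ⟨hx1, hx2⟩ | ⟨hx1, _, hx2⟩ <;>
        rcases hmy with ⟨hy1, hy2⟩ | ⟨hy1, _, hy2⟩
      · -- both positive
        have hax := (h1 _ hx2)
        have hay := (h1 _ hy2)
        have hb : x + y < 2*(2*(t:ℤ)) := by omega
        have := int_dvd_window (by omega : (0:ℤ) < 2*(t:ℤ)) hxy hb hdvd
        have := (h2 _ hx2 _ hy2).1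
        omega
      · -- x pos, y neg
        have hax := (h1 _ hx2)
        have := Int.le_of_dvd hxy hdvd
        omega
      · have hay := (h1 _ hy2)
        have := Int.le_of_dvd hxy hdvd
        omega
      · omega
    · intro x y hx hy hmx hmy hxy hdvd
      have hdvd' : (2*((t:ℤ)+1)) ∣ (x + y) := by
        exact_mod_cast hdvd
      rcases hmx with ⟨hx1, hx2⟩ | ⟨hx1, _, hx2⟩ <;>
        rcases hmy with ⟨hy1, hy2⟩ | ⟨hy1, _, hy2⟩
      · have hax := (h1 _ hx2)
        have hay := (h1 _ hy2)
        have hb : x + y < 2*(2*((t:ℤ)+1)) := by omega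
        have := int_dvd_window (by omega : (0:ℤ) < 2*((t:ℤ)+1)) hxy hb hdvd'
        have := (h2 _ hx2 _ hy2).2.1
        omega
      · have hax := (h1 _ hx2)
        have := Int.le_of_dvd hxy hdvd'
        omega
      · have hay := (h1 _ hy2)
        have := Int.le_of_dvd hxy hdvd'
        omega
      · omega

end IntPartition

namespace IntPartition

variable {lam : IntPartition}

lemma cInt_gap2 {i j : ℕ} (hij : i ≤ j)
    (h2 : ∀ m, i ≤ m → m < j → lam.cInt (m+1) + 2 ≤ lam.cInt m) :
    lam.cInt j + 2*((j:ℤ) - i) ≤ lam.cInt i := by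
  induction j with
  | zero =>
    have : i = 0 := by omega
    subst this; simp
  | succ n ih =>
    rcases Nat.lt_or_ge i (n+1) with h | h
    · have h1 := ih (by omega) (fun m hm1 hm2 => h2 m hm1 (by omega))
      have h3 := h2 n (by omega) (by omega)
      push_cast at *
      omega
    · have : i = n + 1 := by omega
      subst this; simp

lemma mem_toS_of_lt_durfee {i : ℕ} (hi : i < lam.durfee) :
    (2 * (lam.parts i - i) - 1) ∈ lam.toS := by
  simp only [toS, Finset.mem_image]
  exact ⟨i, Finset.mem_range.mpr hi, rfl⟩

lemma distinct_iff_nd (hsc : lam.IsSelfConjugate) :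
    (∀ i j, i < lam.durfee → j < lam.durfee → i ≠ j → lam.parts i ≠ lam.parts j) ↔
      (∀ a ∈ lam.toS, ∀ b ∈ lam.toS, b ≠ a + 2) := by
  constructor
  · intro hd a ha b hb hab
    simp only [toS, Finset.mem_image] at ha hb
    obtain ⟨i, hi, hia⟩ := ha
    obtain ⟨j, hj, hjb⟩ := hb
    rw [Finset.mem_range] at hi hj
    have hvi := toS_val i hi
    have hvj := toS_val j hj
    have hc : lam.cInt j = lam.cInt i + 1 := by omega
    have hji : j < i := by
      by_contra hc2
      push_neg at hc2
      rcases Nat.eq_or_lt_of_le hc2 with h | h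
      · subst h; omega
      · have := lam.cInt_strictAnti h
        omega
    have := lam.cInt_le (le_of_lt hji)
    have hi1 : i = j + 1 := by omega
    subst hi1
    apply hd j (j+1) hj hi (by omega)
    have h1 := (lam.durfee_iff j).mp hj
    have h2 := (lam.durfee_iff (j+1)).mp hi
    simp only [cInt] at hc
    omega
  · intro hnd i j hi hj hij heq
    wlog hlt : i < j generalizing i j
    · exact this j i hj hi (by omega) heq.symm (by omega)
    have hc : lam.cInt i = lam.cInt j + ((j:ℤ) - i) := by
      simp only [cInt]; rw [heq]; omega
    have hnot : ¬ ∀ m, i ≤ m → m < j → lam.cInt (m+1) + 2 ≤ lam.cInt m := by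
      intro hall
      have := cInt_gap2 (le_of_lt hlt) hall
      omega
    push_neg at hnot
    obtain ⟨m, hm1, hm2, hm3⟩ := hnot
    have hstep := lam.cInt_strictAnti (show m < m + 1 by omega)
    have hmeq : lam.cInt m = lam.cInt (m+1) + 1 := by omega
    have hjp := (lam.durfee_iff j).mp hj
    have hmd : m < lam.durfee := by
      rw [durfee_iff]
      have h1 : lam.cInt j ≤ lam.cInt m := by
        rcases Nat.eq_or_lt_of_le (show m ≤ j by omega) with h | h
        · rw [h]
        · exact le_of_lt (lam.cInt_strictAnti h)
      simp only [cInt] at h1 ⊢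
      omega
    have hm1lt : m + 1 < lam.durfee := by
      rw [durfee_iff]
      rcases Nat.eq_or_lt_of_le (show m + 1 ≤ j by omega) with h2 | h2
      · rw [h2]; exact hjp
      · have h3 := lam.cInt_strictAnti h2
        simp only [cInt] at h3 ⊢
        omega
    have ha := mem_toS_of_lt_durfee hm1lt
    have hb := mem_toS_of_lt_durfee hmd
    apply hnd _ ha _ hb
    have hv1 := toS_val (m+1) hm1lt
    have hv2 := toS_val m hmd
    omega

end IntPartition

namespace IntPartition

/-- The decreasing enumeration of a finset of naturals. -/
noncomputable def dSeq (S : Finset ℕ) : ℕ → ℕ := fun i => ((S.sort (· ≤ ·)).reverse).getD i 0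

lemma dSeq_spec {S : Finset ℕ} {f : ℕ → ℕ} {k : ℕ}
    (hf : ∀ i j, i < j → j < k → f j < f i) (hS : S = (Finset.range k).image f) :
    ∀ i, i < k → dSeq S i = f i := by
  have hinj : Set.InjOn f (Finset.range k) := by
    intro a ha b hb hab
    simp only [Finset.coe_range, Set.mem_Iio] at ha hb
    by_contra hne
    rcases Nat.lt_or_ge a b with h | h
    · exact absurd hab (Nat.ne_of_gt (hf a b h hb))
    · exact absurd hab (Nat.ne_of_gt (hf b a (by omega) ha)).symm
  have hl2sorted : ((List.range k).map f).Pairwise (· > ·) := by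
    rw [List.pairwise_map]
    apply List.pairwise_iff_getElem.mpr
    intro a b ha hb hab
    simp only [List.getElem_range]
    exact hf a b hab (by simpa using hb)
  have hperm : ((S.sort (· ≤ ·)).reverse : Multiset ℕ) = ((List.range k).map f : List ℕ) := by
    have h1 : ((S.sort (· ≤ ·)).reverse : Multiset ℕ) = (S.sort (· ≤ ·) : Multiset ℕ) := by
      rw [Multiset.coe_eq_coe]
      exact (List.reverse_perm _)
    rw [h1, Finset.sort_eq, hS]
    rw [Finset.image_val]
    have hnodup : ((Finset.range k).1.map f).Nodup := by
      apply Multiset.Nodup.map_on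
      · intro x hx y hy hxy
        exact hinj (by simpa using hx) (by simpa using hy) hxy
      · exact (Finset.range k).2
    rw [Multiset.Nodup.dedup hnodup]
    rfl
  have hsorted : ((S.sort (· ≤ ·)).reverse).Pairwise (· > ·) := by
    rw [List.pairwise_reverse]
    have := (Finset.sortedLT_sort S).pairwise
    simpa [flip] using this
  have heq : (S.sort (· ≤ ·)).reverse = (List.range k).map f := by
    apply List.Perm.eq_of_pairwise (fun a b _ _ h1 h2 => by omega) hsorted hl2sorted (Multiset.coe_eq_coe.mp hperm)
  intro i hi
  simp only [dSeq, heq]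
  rw [List.getD_eq_getElem _ _ (by simpa using hi)]
  simp

section FromS

variable (S : Finset ℕ)

/-- parts of the self-conjugate partition with diagonal hook lengths `S`. -/
noncomputable def partsOf : ℕ → ℕ := fun i =>
  if i < S.card then (dSeq S i + 1)/2 + i
  else ((Finset.range S.card).filter (fun m => 2*i < dSeq S m + 2*m)).card

variable {S} (hodd : ∀ a ∈ S, a % 2 = 1)

lemma dSeq_sorted (S : Finset ℕ) : ((S.sort (· ≤ ·)).reverse).Pairwise (· > ·) := by
  rw [List.pairwise_reverse]
  have := (Finset.sortedLT_sort S).pairwise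
  simpa [flip] using this

lemma dSeq_length (S : Finset ℕ) : ((S.sort (· ≤ ·)).reverse).length = S.card := by
  simp [Finset.length_sort]

lemma dSeq_mem {i : ℕ} (hi : i < S.card) : dSeq S i ∈ S := by
  have hl : i < ((S.sort (· ≤ ·)).reverse).length := by rw [dSeq_length]; exact hi
  have : dSeq S i = ((S.sort (· ≤ ·)).reverse)[i] := List.getD_eq_getElem _ _ hl
  rw [this]
  have hm : ((S.sort (· ≤ ·)).reverse)[i] ∈ (S.sort (· ≤ ·)).reverse := List.getElem_mem hl
  rw [List.mem_reverse, Finset.mem_sort] at hm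
  exact hm

lemma dSeq_strictAnti {i j : ℕ} (hij : i < j) (hj : j < S.card) : dSeq S j < dSeq S i := by
  have hl : j < ((S.sort (· ≤ ·)).reverse).length := by rw [dSeq_length]; exact hj
  have hl2 : i < ((S.sort (· ≤ ·)).reverse).length := by omega
  have e1 : dSeq S i = ((S.sort (· ≤ ·)).reverse)[i] := List.getD_eq_getElem _ _ hl2
  have e2 : dSeq S j = ((S.sort (· ≤ ·)).reverse)[j] := List.getD_eq_getElem _ _ hl
  rw [e1, e2]
  exact List.pairwise_iff_getElem.mp (dSeq_sorted S) i j hl2 hl hij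

lemma dSeq_surj {a : ℕ} (ha : a ∈ S) : ∃ i, i < S.card ∧ dSeq S i = a := by
  have hm : a ∈ (S.sort (· ≤ ·)).reverse := by
    rw [List.mem_reverse, Finset.mem_sort]
    exact ha
  obtain ⟨i, hi, hval⟩ := List.mem_iff_getElem.mp hm
  refine ⟨i, by rw [dSeq_length] at hi; exact hi, ?_⟩
  have : dSeq S i = ((S.sort (· ≤ ·)).reverse)[i] := List.getD_eq_getElem _ _ hi
  rw [this, hval]

include hodd in
lemma dSeq_odd {i : ℕ} (hi : i < S.card) : dSeq S i % 2 = 1 :=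
  hodd _ (dSeq_mem hi)

include hodd in
lemma dSeq_step {i j : ℕ} (hij : i ≤ j) (hj : j < S.card) :
    dSeq S j + 2*(j - i) ≤ dSeq S i := by
  induction j with
  | zero =>
    have : i = 0 := by omega
    subst this; simp
  | succ n ih =>
    rcases Nat.lt_or_ge i (n+1) with h | h
    · have h1 := ih (by omega) (by omega)
      have h2 := dSeq_strictAnti (show n < n+1 by omega) hj
      have h3 := dSeq_odd hodd (show n < S.card by omega)
      have h4 := dSeq_odd hodd hj
      omega
    · have : i = n + 1 := by omega
      subst this; simp

include hodd in
lemma partsOf_lb {i : ℕ} (hi : i < S.card) : S.card ≤ partsOf S i := by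
  have h1 := dSeq_step hodd (show i ≤ S.card - 1 by omega) (by omega)
  have h2 := dSeq_odd hodd (show S.card - 1 < S.card by omega)
  simp only [partsOf, if_pos hi]
  omega

lemma partsOf_ub {i : ℕ} (hi : S.card ≤ i) : partsOf S i ≤ S.card := by
  simp only [partsOf, if_neg (by omega : ¬ i < S.card)]
  calc ((Finset.range S.card).filter _).card ≤ (Finset.range S.card).card :=
        Finset.card_filter_le _ _
    _ = S.card := Finset.card_range _

include hodd in
lemma partsOf_antitone : ∀ i j, i ≤ j → partsOf S j ≤ partsOf S i := by
  intro i j hij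
  rcases Nat.lt_or_ge j S.card with hj | hj
  · rcases Nat.eq_or_lt_of_le hij with h | h
    · subst h; omega
    · have h1 := dSeq_step hodd hij hj
      have h2 := dSeq_odd hodd hj
      have h3 := dSeq_odd hodd (show i < S.card by omega)
      simp only [partsOf, if_pos hj, if_pos (show i < S.card by omega)]
      omega
  · rcases Nat.lt_or_ge i S.card with hi | hi
    · exact le_trans (partsOf_ub hj) (partsOf_lb hodd hi)
    · simp only [partsOf, if_neg (by omega : ¬ i < S.card), if_neg (by omega : ¬ j < S.card)]
      apply Finset.card_le_card
      intro m hm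
      simp only [Finset.mem_filter] at hm ⊢
      exact ⟨hm.1, by omega⟩

lemma partsOf_finite : ∃ N, ∀ i, N ≤ i → partsOf S i = 0 := by
  refine ⟨S.card + S.sum id, fun i hi => ?_⟩
  have hcard : ¬ i < S.card := by omega
  simp only [partsOf, if_neg hcard]
  rw [Finset.card_eq_zero, Finset.filter_eq_empty_iff]
  intro m hm
  rw [Finset.mem_range] at hm
  have : dSeq S m ≤ S.sum id := by
    have := Finset.single_le_sum (f := (id : ℕ → ℕ)) (fun a _ => Nat.zero_le _) (dSeq_mem hm)
    simpa using this
  omega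

/-- The self-conjugate partition with diagonal hook lengths `S`. -/
noncomputable def fromS (hodd : ∀ a ∈ S, a % 2 = 1) : IntPartition :=
  ⟨partsOf S, partsOf_antitone hodd, partsOf_finite⟩

include hodd in
lemma fromS_sym : ∀ i j, (j < partsOf S i ↔ i < partsOf S j) := by
  have filt_iff : ∀ j i : ℕ, S.card ≤ j →
      (i < partsOf S j ↔ (i < S.card ∧ 2*j < dSeq S i + 2*i)) := by
    intro j i hj
    simp only [partsOf, if_neg (by omega : ¬ j < S.card)]
    set F := (Finset.range S.card).filter (fun m => 2*j < dSeq S m + 2*m) with hF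
    have hdc : ∀ a b : ℕ, a ≤ b → b ∈ F → a ∈ F := by
      intro a b hab hb
      simp only [hF, Finset.mem_filter, Finset.mem_range] at hb ⊢
      refine ⟨by omega, ?_⟩
      rcases Nat.eq_or_lt_of_le hab with h | h
      · subst h; exact hb.2
      · have := dSeq_step hodd (le_of_lt h) hb.1
        omega
    have hrange := finset_dc_eq_range F hdc
    constructor
    · intro hi
      have hmem : i ∈ F := by rw [hrange]; exact Finset.mem_range.mpr hi
      simpa [hF, Finset.mem_filter, Finset.mem_range] using hmem
    · intro hi
      have hmem : i ∈ F := by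
        simp only [hF, Finset.mem_filter, Finset.mem_range]
        exact hi
      rw [hrange] at hmem
      simpa using hmem
  intro i j
  rcases Nat.lt_or_ge i S.card with hi | hi <;> rcases Nat.lt_or_ge j S.card with hj | hj
  · constructor
    · intro _; exact lt_of_lt_of_le hi (partsOf_lb hodd hj)
    · intro _; exact lt_of_lt_of_le hj (partsOf_lb hodd hi)
  · -- i < card ≤ j
    rw [filt_iff j i hj]
    simp only [partsOf, if_pos hi]
    have h2 := dSeq_odd hodd hi
    constructor
    · intro h; exact ⟨hi, by omega⟩
    · rintro ⟨-, h⟩; omega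
  · rw [filt_iff i j hi]
    simp only [partsOf, if_pos hj]
    have h2 := dSeq_odd hodd hj
    constructor
    · rintro ⟨-, h⟩; omega
    · intro h; exact ⟨hj, by omega⟩
  · have h1 := partsOf_ub (S := S) hi
    have h2 := partsOf_ub (S := S) hj
    omega

include hodd in
lemma fromS_selfConj : (fromS hodd).IsSelfConjugate := by
  intro j
  have hp : (fromS hodd).parts = partsOf S := rfl
  have h1 : ∀ i, i < (fromS hodd).conjParts j ↔ i < partsOf S j := by
    intro i
    rw [(fromS hodd).cell_iff i j, hp]
    exact fromS_sym hodd i j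
  have ha := h1 ((fromS hodd).conjParts j)
  have hb := h1 (partsOf S j)
  rw [hp]
  omega

end FromS

end IntPartition

namespace IntPartition

variable {S : Finset ℕ} (hodd : ∀ a ∈ S, a % 2 = 1)

include hodd in
lemma fromS_durfee : (fromS hodd).durfee = S.card := by
  have h1 : ∀ i, i < (fromS hodd).durfee ↔ i < S.card := by
    intro i
    rw [(fromS hodd).durfee_iff]
    show i < partsOf S i ↔ _
    constructor
    · intro h
      by_contra hc
      have := partsOf_ub (S := S) (i := i) (by omega)
      omega
    · intro h
      exact lt_of_lt_of_le h (partsOf_lb hodd h)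
  have ha := h1 ((fromS hodd).durfee)
  have hb := h1 S.card
  omega

include hodd in
lemma fromS_toS : (fromS hodd).toS = S := by
  ext a
  simp only [toS, Finset.mem_image, fromS_durfee hodd]
  constructor
  · rintro ⟨i, hi, hval⟩
    rw [Finset.mem_range] at hi
    have hodd' := dSeq_odd hodd hi
    have : (fromS hodd).parts i = (dSeq S i + 1)/2 + i := by
      show partsOf S i = _
      simp [partsOf, if_pos hi]
    rw [this] at hval
    have : a = dSeq S i := by omega
    rw [this]
    exact dSeq_mem hi
  · intro ha
    obtain ⟨i, hi, hval⟩ := dSeq_surj ha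
    refine ⟨i, Finset.mem_range.mpr hi, ?_⟩
    have hodd' := dSeq_odd hodd hi
    have : (fromS hodd).parts i = (dSeq S i + 1)/2 + i := by
      show partsOf S i = _
      simp [partsOf, if_pos hi]
    rw [this]
    omega

lemma toS_odd (lam : IntPartition) : ∀ a ∈ lam.toS, a % 2 = 1 := by
  intro a ha
  simp only [toS, Finset.mem_image] at ha
  obtain ⟨i, hi, hval⟩ := ha
  rw [Finset.mem_range] at hi
  have := (lam.durfee_iff i).mp hi
  omega

lemma toS_fromS {lam : IntPartition} (hsc : lam.IsSelfConjugate) :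
    fromS (toS_odd lam) = lam := by
  set S := lam.toS with hS
  have hk : S.card = lam.durfee := by
    rw [hS, toS]
    rw [Finset.card_image_of_injOn]
    · exact Finset.card_range _
    · intro a ha b hb hab
      simp only [Finset.coe_range, Set.mem_Iio] at ha hb
      have da := (lam.durfee_iff a).mp ha
      have db := (lam.durfee_iff b).mp hb
      have hab' : 2 * (lam.parts a - a) - 1 = 2 * (lam.parts b - b) - 1 := hab
      by_contra hne
      rcases Nat.lt_or_ge a b with h | h
      · have h1 := lam.cInt_strictAnti h
        have h2 := lam.antitone a b (le_of_lt h)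
        simp only [cInt] at h1
        omega
      · have h' : b < a := by omega
        have h1 := lam.cInt_strictAnti h'
        have h2 := lam.antitone b a (le_of_lt h')
        simp only [cInt] at h1
        omega
  have hd : ∀ i, i < lam.durfee → dSeq S i = 2 * (lam.parts i - i) - 1 := by
    apply dSeq_spec (k := lam.durfee) (f := fun i => 2 * (lam.parts i - i) - 1)
    · intro i j hij hj
      have h1 := lam.cInt_strictAnti hij
      have di := (lam.durfee_iff i).mp (by omega)
      have dj := (lam.durfee_iff j).mp hj
      simp only [cInt] at h1
      omega
    · rw [hS, toS]
  apply ext'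
  funext i
  show partsOf S i = lam.parts i
  rcases Nat.lt_or_ge i lam.durfee with hi | hi
  · have hdi := (lam.durfee_iff i).mp hi
    simp only [partsOf, if_pos (by omega : i < S.card), hd i hi]
    omega
  · simp only [partsOf, if_neg (by omega : ¬ i < S.card)]
    -- lam.parts i = conjParts i = #{m < durfee | i < parts m}
    have hset : {m : ℕ | i < lam.parts m} =
        ↑((Finset.range S.card).filter (fun m => 2*i < dSeq S m + 2*m)) := by
      ext m
      simp only [Set.mem_setOf_eq, Finset.coe_filter, Finset.mem_range, Set.mem_setOf_eq]
      constructor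
      · intro hm
        have hmd : m < lam.durfee := by
          rw [lam.durfee_iff]
          by_contra hc
          push_neg at hc
          have h2 : lam.parts m ≤ lam.durfee := by
            rcases Nat.lt_or_ge m lam.durfee with h | h
            · omega
            · by_contra hc2
              push_neg at hc2
              have : lam.durfee < lam.parts lam.durfee := by
                have := lam.antitone lam.durfee m h
                omega
              have := (lam.durfee_iff lam.durfee).mpr this
              omega
          omega
        refine ⟨by omega, ?_⟩
        rw [hd m hmd]
        have hdm := (lam.durfee_iff m).mp hmd
        omega
      · rintro ⟨hm, hval⟩
        have hmd : m < lam.durfee := by omega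
        rw [hd m hmd] at hval
        have hdm := (lam.durfee_iff m).mp hmd
        omega
    have : lam.parts i = lam.conjParts i := (hsc i).symm
    rw [this, conjParts, hset, Nat.card_coe_set_eq, Set.ncard_coe_finset]

end IntPartition

namespace IntPartition

lemma inDS_iff_condQ {t : ℕ} (ht : 1 ≤ t) (lam : IntPartition) (hsc : lam.IsSelfConjugate) :
    (lam.IsCore t ∧ lam.IsCore (t+1) ∧
      (∀ i j, i < lam.durfee → j < lam.durfee → i ≠ j → lam.parts i ≠ lam.parts j))
      ↔ CondQ t lam.toS := by
  rw [core_iff_coreCondZ hsc t, core_iff_coreCondZ hsc (t+1), distinct_iff_nd hsc]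
  exact coreCond_iff_condQ ht lam.toS (toS_odd lam)

noncomputable def dsEquiv (t : ℕ) (ht : 1 ≤ t) :
    {lam : IntPartition // lam.InDS t} ≃ {S : Finset ℕ // CondQ t S} where
  toFun := fun ⟨lam, h⟩ => ⟨lam.toS, (inDS_iff_condQ ht lam h.1).mp ⟨h.2.1, h.2.2.1, h.2.2.2⟩⟩
  invFun := fun ⟨S, hS⟩ =>
    ⟨fromS (fun a ha => (hS.1 a ha).1), by
      have hodd : ∀ a ∈ S, a % 2 = 1 := fun a ha => (hS.1 a ha).1
      have hsc := fromS_selfConj hodd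
      have hcond : CondQ t (fromS hodd).toS := by rw [fromS_toS hodd]; exact hS
      have := (inDS_iff_condQ ht (fromS hodd) hsc).mpr hcond
      exact ⟨hsc, this.1, this.2.1, this.2.2⟩⟩
  left_inv := fun ⟨lam, h⟩ => Subtype.ext (toS_fromS h.1)
  right_inv := fun ⟨S, hS⟩ => Subtype.ext (fromS_toS _)

lemma card_eq_condQ (t : ℕ) (ht : 1 ≤ t) :
    Nat.card {lam : IntPartition // lam.InDS t} = Nat.card {S : Finset ℕ // CondQ t S} :=
  Nat.card_congr (dsEquiv t ht)

end IntPartition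

-- Section 8: counting
def SpreadC (T : Finset ℕ) : Prop := ∀ i ∈ T, ∀ j ∈ T, i ≠ j → (i + 3 ≤ j ∨ j + 3 ≤ i)

instance : DecidablePred SpreadC := fun T => by unfold SpreadC; infer_instance

def countA (n : ℕ) : ℕ :=
  ((Finset.range n).powerset.filter SpreadC).card

/-- relabeling from `Q_t` to indices -/
def idxF (t a : ℕ) : ℕ := if a < t then a - 1 else 2*t - a
def labF (t i : ℕ) : ℕ := if i % 2 = 0 then i + 1 else 2*t - i

namespace IntPartition

lemma condQ_elem {t : ℕ} {S : Finset ℕ} (hS : CondQ t S) {a : ℕ} (ha : a ∈ S) :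
    a % 2 = 1 ∧ a < 2*t ∧ a ≠ t ∧ a ≠ t + 1 := by
  have h1 := hS.1 a ha
  have h2 := hS.2 a ha a ha
  omega

lemma lab_idx {t a : ℕ} (h : a % 2 = 1 ∧ a < 2*t ∧ a ≠ t ∧ a ≠ t + 1) :
    labF t (idxF t a) = a := by
  simp only [idxF, labF]
  split_ifs <;> omega

lemma idx_lab {t i : ℕ} (h : i < t - 1) : idxF t (labF t i) = i := by
  simp only [idxF, labF]
  split_ifs <;> omega

lemma idx_mem_range {t a : ℕ} (h : a % 2 = 1 ∧ a < 2*t ∧ a ≠ t ∧ a ≠ t + 1) :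
    idxF t a < t - 1 := by
  simp only [idxF]
  split_ifs <;> omega

noncomputable def relabelEquiv (t : ℕ) (ht : 1 ≤ t) :
    {S : Finset ℕ // CondQ t S} ≃ {T : Finset ℕ // T ⊆ Finset.range (t-1) ∧ SpreadC T} where
  toFun := fun ⟨S, hS⟩ => ⟨S.image (idxF t), by
    constructor
    · intro x hx
      simp only [Finset.mem_image] at hx
      obtain ⟨a, ha, rfl⟩ := hx
      exact Finset.mem_range.mpr (idx_mem_range (condQ_elem hS ha))
    · intro x hx y hy hxy
      simp only [Finset.mem_image] at hx hy
      obtain ⟨a, ha, rfl⟩ := hx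
      obtain ⟨b, hb, rfl⟩ := hy
      have hea := condQ_elem hS ha
      have heb := condQ_elem hS hb
      have hab : a ≠ b := by
        intro h; subst h; exact hxy rfl
      have hp1 := hS.2 a ha b hb
      have hp2 := hS.2 b hb a ha
      simp only [idxF] at hxy ⊢
      split_ifs at hxy ⊢ <;> omega⟩
  invFun := fun ⟨T, hT⟩ => ⟨T.image (labF t), by
    have hmem : ∀ i ∈ T, i < t - 1 := fun i hi => Finset.mem_range.mp (hT.1 hi)
    constructor
    · intro a ha
      simp only [Finset.mem_image] at ha
      obtain ⟨i, hi, rfl⟩ := ha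
      have := hmem i hi
      simp only [labF]
      split_ifs <;> omega
    · intro a ha b hb
      simp only [Finset.mem_image] at ha hb
      obtain ⟨i, hi, rfl⟩ := ha
      obtain ⟨j, hj, rfl⟩ := hb
      have h1 := hmem i hi
      have h2 := hmem j hj
      rcases eq_or_ne i j with h | h
      · subst h
        simp only [labF]
        split_ifs <;> omega
      · have := hT.2 i hi j hj h
        simp only [labF]
        split_ifs <;> omega⟩
  left_inv := fun ⟨S, hS⟩ => by
    apply Subtype.ext
    show (S.image (idxF t)).image (labF t) = S
    rw [Finset.image_image]
    have : S.image (labF t ∘ idxF t) = S.image id := by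
      apply Finset.image_congr
      intro a ha
      exact lab_idx (condQ_elem hS ha)
    rw [this, Finset.image_id]
  right_inv := fun ⟨T, hT⟩ => by
    apply Subtype.ext
    show (T.image (labF t)).image (idxF t) = T
    rw [Finset.image_image]
    have : T.image (idxF t ∘ labF t) = T.image id := by
      apply Finset.image_congr
      intro i hi
      exact idx_lab (Finset.mem_range.mp (hT.1 hi))
    rw [this, Finset.image_id]

lemma card_condQ_eq_countA (t : ℕ) (ht : 1 ≤ t) :
    Nat.card {S : Finset ℕ // CondQ t S} = countA (t-1) := by
  rw [Nat.card_congr (relabelEquiv t ht)]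
  rw [Nat.card_congr (Equiv.subtypeEquivRight (q := fun T =>
    T ∈ (Finset.range (t-1)).powerset.filter SpreadC) (fun T => by
      simp [Finset.mem_filter, Finset.mem_powerset]))]
  rw [Nat.card_eq_finsetCard]
  rfl

end IntPartition

lemma countA_rec (n : ℕ) : countA (n+3) = countA (n+2) + countA n := by
  classical
  set A := (Finset.range (n+3)).powerset.filter SpreadC with hA
  have hsplit := Finset.card_filter_add_card_filter_not
    (s := A) (p := fun T => n+2 ∈ T)
  have h1 : (A.filter (fun T => ¬ (fun T => n+2 ∈ T) T)).card = countA (n+2) := by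
    congr 1
    ext T
    simp only [hA, Finset.mem_filter, Finset.mem_powerset]
    constructor
    · rintro ⟨⟨hsub, hsp⟩, hnm⟩
      refine ⟨?_, hsp⟩
      intro x hx
      have := hsub hx
      rw [Finset.mem_range] at *
      have : x ≠ n + 2 := fun h => hnm (h ▸ hx)
      omega
    · rintro ⟨hsub, hsp⟩
      have hsub' : T ⊆ Finset.range (n+3) := fun x hx => by
        have := hsub hx; rw [Finset.mem_range] at *; omega
      refine ⟨⟨hsub', hsp⟩, fun hm => ?_⟩
      have := hsub hm
      rw [Finset.mem_range] at this
      omega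
  have h2 : (A.filter (fun T => n+2 ∈ T)).card = countA n := by
    refine Finset.card_bij' (fun T _ => T.erase (n+2)) (fun T _ => insert (n+2) T)
      ?hi ?hj ?li ?ri
    case hi =>
      intro T hT
      simp only [hA, Finset.mem_filter, Finset.mem_powerset] at hT ⊢
      obtain ⟨⟨hsub, hsp⟩, hm⟩ := hT
      constructor
      · intro x hx
        rw [Finset.mem_erase] at hx
        obtain ⟨hne, hxT⟩ := hx
        have hlt := Finset.mem_range.mp (hsub hxT)
        have := hsp x hxT (n+2) hm hne
        rw [Finset.mem_range]
        omega
      · intro x hx y hy hxy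
        rw [Finset.mem_erase] at hx hy
        exact hsp x hx.2 y hy.2 hxy
    case hj =>
      intro T hT
      simp only [hA, Finset.mem_filter, Finset.mem_powerset] at hT ⊢
      obtain ⟨hsub, hsp⟩ := hT
      refine ⟨⟨?_, ?_⟩, Finset.mem_insert_self _ _⟩
      · intro x hx
        rw [Finset.mem_insert] at hx
        rw [Finset.mem_range]
        rcases hx with h | h
        · omega
        · have := Finset.mem_range.mp (hsub h); omega
      · intro x hx y hy hxy
        rw [Finset.mem_insert] at hx hy
        rcases hx with rfl | hx <;> rcases hy with rfl | hy
        · omega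
        · have := Finset.mem_range.mp (hsub hy); omega
        · have := Finset.mem_range.mp (hsub hx); omega
        · exact hsp x hx y hy hxy
    case li =>
      intro T hT
      simp only [hA, Finset.mem_filter] at hT
      exact Finset.insert_erase hT.2
    case ri =>
      intro T hT
      simp only [Finset.mem_filter, Finset.mem_powerset] at hT
      apply Finset.erase_insert
      intro hm
      have := Finset.mem_range.mp (hT.1 hm)
      omega
  rw [h1, h2] at hsplit
  have : A.card = countA (n+3) := rfl
  omega

lemma countA_zero : countA 0 = 1 := by decide
lemma countA_one : countA 1 = 2 := by decide
lemma countA_two : countA 2 = 3 := by decide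

-- Section 9: assembly
/-- `fDS t` is the number of partitions in `DS(t)`. -/
noncomputable def fDS (t : ℕ) : ℕ := Nat.card {lam : IntPartition // lam.InDS t}

lemma fDS_eq (t : ℕ) (ht : 1 ≤ t) : fDS t = countA (t-1) := by
  rw [fDS, IntPartition.card_eq_condQ t ht, IntPartition.card_condQ_eq_countA t ht]

def emptyPartition : IntPartition := ⟨fun _ => 0, fun _ _ _ => le_refl 0, ⟨0, fun _ _ => rfl⟩⟩

lemma empty_inDS (t : ℕ) : emptyPartition.InDS t := by
  have hconj : ∀ j, emptyPartition.conjParts j = 0 := by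
    intro j
    rw [IntPartition.conjParts]
    have : {i : ℕ | j < emptyPartition.parts i} = ∅ := by
      ext i; simp [emptyPartition]
    rw [this]
    exact Nat.card_of_isEmpty
  refine ⟨fun j => hconj j, ?_, ?_, ?_⟩
  · intro i j hcell
    exact absurd hcell (by simp [IntPartition.IsCell, emptyPartition])
  · intro i j hcell
    exact absurd hcell (by simp [IntPartition.IsCell, emptyPartition])
  · intro i j hi hj hij
    exfalso
    have := (emptyPartition.durfee_iff i).mp hi
    simp [emptyPartition] at this

lemma inDS_zero_unique (lam : IntPartition) (h : lam.InDS 0) : lam = emptyPartition := by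
  apply IntPartition.ext'
  funext i
  show lam.parts i = 0
  by_contra hne
  have hcell : lam.IsCell i 0 := by
    simp only [IntPartition.IsCell]
    omega
  exact h.2.2.1 i 0 hcell (one_dvd _)

lemma fDS_zero : fDS 0 = 1 := by
  rw [fDS, Nat.card_eq_one_iff_unique]
  constructor
  · constructor
    intro a b
    apply Subtype.ext
    rw [inDS_zero_unique a.1 a.2, inDS_zero_unique b.1 b.2]
  · exact ⟨⟨emptyPartition, empty_inDS 0⟩⟩

/-- `f(1) = 1`, `f(2) = 2`, `f(3) = 3`, and `f(t) = f(t-1) + f(t-3)` for `t ≥ 3`. -/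
theorem fDS_recurrence :
    fDS 1 = 1 ∧ fDS 2 = 2 ∧ fDS 3 = 3 ∧
      ∀ t : ℕ, 3 ≤ t → fDS t = fDS (t - 1) + fDS (t - 3) := by
  have h1 : fDS 1 = 1 := by rw [fDS_eq 1 (by omega)]; exact countA_zero
  have h2 : fDS 2 = 2 := by rw [fDS_eq 2 (by omega)]; exact countA_one
  have h3 : fDS 3 = 3 := by rw [fDS_eq 3 (by omega)]; exact countA_two
  refine ⟨h1, h2, h3, ?_⟩
  intro t ht
  rcases Nat.eq_or_lt_of_le ht with h | h
  · rw [← h]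
    show fDS 3 = fDS 2 + fDS 0
    rw [h2, h3, fDS_zero]
  · have ht4 : 4 ≤ t := h
    have e1 : fDS t = countA (t-1) := fDS_eq t (by omega)
    have e2 : fDS (t-1) = countA (t-2) := by
      rw [fDS_eq (t-1) (by omega)]
      congr 1 <;> omega
    have e3 : fDS (t-3) = countA (t-4) := by
      rw [fDS_eq (t-3) (by omega)]
      congr 1 <;> omega
    have e4 : t - 1 = (t-4) + 3 := by omega
    have e5 : t - 2 = (t-4) + 2 := by omega
    rw [e1, e2, e3, e4, e5]
    exact countA_rec (t-4)
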